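/- arXiv:2310.18036 — 2 statements merged into one kernel-verified Lean document; each statement's English description precedes it below -/
import Mathlib

section
/- If v is a separator node in a 2-cut STT T, then v lies on the path in the underlying tree G between the two vertices of ∂(T_v). -/
open SimpleGraph

variable {V : Type*}

/-- Reachability within a vertex set `S`. -/
def reachIn (G : SimpleGraph V) (S : Set V) : V → V → Prop :=
  Relation.ReflTransGen (fun x y => x ∈ S ∧ y ∈ S ∧ G.Adj x y)

/-- The connected component of `v` inside the vertex set `S`. -/
def compIn (G : SimpleGraph V) (S : Set V) (v : V) : Set V :=
  {u | reachIn G S v u}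

/-- `IsSearchTree G par S r`: the parent map `par` describes a search tree with root `r`
on the part of `G` induced by `S`, built recursively: the root `r` is chosen, and each
connected component of `S \ {r}` carries a search tree whose root is a child of `r`. -/
inductive IsSearchTree (G : SimpleGraph V) (par : V → Option V) : Set V → V → Prop where
  | node (S : Set V) (r : V) (ρ : V → V) (hr : r ∈ S)
      (hρ : ∀ v ∈ S, v ≠ r → par (ρ v) = some r)
      (h : ∀ v ∈ S, v ≠ r → IsSearchTree G par (compIn G (S \ {r}) v) (ρ v)) :
      IsSearchTree G par S r

/-- `isAnc par a v`: `a` is an ancestor of `v` (reflexively). -/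
def isAnc (par : V → Option V) (a v : V) : Prop :=
  Relation.ReflTransGen (fun x y => par x = some y) v a

/-- The subtree rooted at `v`: all descendants of `v` (including `v`). -/
def subtree (par : V → Option V) (v : V) : Set V := {u | isAnc par v u}

/-- The outer boundary `∂(T_v)` of the subtree rooted at `v`. -/
def bdry (G : SimpleGraph V) (par : V → Option V) (v : V) : Set V :=
  {x | x ∉ subtree par v ∧ ∃ u ∈ subtree par v, G.Adj x u}

/-- A search tree is 2-cut if every subtree boundary has size at most 2. -/
def TwoCut (G : SimpleGraph V) (par : V → Option V) : Prop :=
  ∀ v, (bdry G par v).ncard ≤ 2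

open Classical in
/-- The STT rotation of `v` with its parent `p`: `p` becomes a child of `v`, `v` takes the
former parent of `p`, and any child `c` of `v` with `p ∈ ∂(T_c)` is reattached to `p`. -/
noncomputable def rotate (G : SimpleGraph V) (par : V → Option V) (v p : V) :
    V → Option V := fun x =>
  if x = v then par p
  else if x = p then some v
  else if par x = some v ∧ p ∈ bdry G par x then some p
  else par x

/-- A splay step at `x`: a single rotation if `x` has no grandparent; a ZIG-ZAG
(two rotations at `x`) if `x` is a separator; a ZIG-ZIG (rotation at the parent,
then at `x`) otherwise. -/
noncomputable def splayStep (G : SimpleGraph V) (par : V → Option V) (x : V) :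
    V → Option V :=
  match par x with
  | none => par
  | some p =>
    match par p with
    | none => rotate G par x p
    | some g =>
      if (bdry G par x).ncard = 2 then
        rotate G (rotate G par x p) x g
      else
        rotate G (rotate G par p g) x p

section Aux

variable {G : SimpleGraph V} {par : V → Option V}

lemma reachIn_symm {T : Set V} {x y : V} (h : reachIn G T x y) : reachIn G T y x := by
  induction h with
  | refl => exact Relation.ReflTransGen.refl
  | tail _ h2 ih => exact Relation.ReflTransGen.head ⟨h2.2.1, h2.1, h2.2.2.symm⟩ ih

lemma reachIn_of_walk {T : Set V} {u v : V} (p : G.Walk u v) (hp : ∀ x ∈ p.support, x ∈ T) :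
    reachIn G T u v := by
  induction p with
  | nil => exact Relation.ReflTransGen.refl
  | @cons u' v' w' h q ih =>
    refine Relation.ReflTransGen.head
      ⟨hp _ (SimpleGraph.Walk.start_mem_support _), hp _ ?_, h⟩
      (ih fun x hx => hp _ ?_)
    · rw [SimpleGraph.Walk.support_cons]
      exact List.mem_cons_of_mem _ (SimpleGraph.Walk.start_mem_support _)
    · rw [SimpleGraph.Walk.support_cons]
      exact List.mem_cons_of_mem _ hx

lemma walk_of_reachIn {T : Set V} {u v : V} (h : reachIn G T u v) :
    u = v ∨ ∃ p : G.Walk u v, ∀ x ∈ p.support, x ∈ T := by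
  induction h using Relation.ReflTransGen.head_induction_on with
  | refl => exact Or.inl rfl
  | head hstep _ ih =>
    obtain ⟨hu, hc, hadj⟩ := hstep
    rcases ih with rfl | ⟨p, hp⟩
    · refine Or.inr ⟨SimpleGraph.Walk.cons hadj SimpleGraph.Walk.nil, ?_⟩
      intro x hx
      simp only [SimpleGraph.Walk.support_cons, SimpleGraph.Walk.support_nil,
        List.mem_cons, List.mem_singleton] at hx
      rcases hx with rfl | rfl | h'
      · exact hu
      · exact hc
      · exact absurd h' List.not_mem_nil
    · refine Or.inr ⟨SimpleGraph.Walk.cons hadj p, ?_⟩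
      intro x hx
      rw [SimpleGraph.Walk.support_cons, List.mem_cons] at hx
      rcases hx with rfl | hx
      · exact hu
      · exact hp x hx

lemma mem_compIn_self {T : Set V} (u : V) : u ∈ compIn G T u := Relation.ReflTransGen.refl

lemma reachIn_compIn_of_reachIn {T : Set V} {u y : V} :
    ∀ {x}, reachIn G T x y → x ∈ compIn G T u → reachIn G (compIn G T u) x y := by
  intro x h
  induction h using Relation.ReflTransGen.head_induction_on with
  | refl => exact fun _ => Relation.ReflTransGen.refl
  | head hstep _ ih =>
    intro hx
    have hc : _ ∈ compIn G T u :=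
      Relation.ReflTransGen.tail hx hstep
    exact Relation.ReflTransGen.head ⟨hx, hc, hstep.2.2⟩ (ih hc)

lemma compIn_conn {T : Set V} {u x y : V} (hx : x ∈ compIn G T u) (hy : y ∈ compIn G T u) :
    reachIn G (compIn G T u) x y :=
  reachIn_compIn_of_reachIn (Relation.ReflTransGen.trans (reachIn_symm hx) hy) hx

lemma root_mem {S : Set V} {r : V} (hT : IsSearchTree G par S r) : r ∈ S := by
  cases hT with | node S r ρ hr _ _ => exact hr

lemma tree_chain {S : Set V} {r : V} (hT : IsSearchTree G par S r) :
    ∀ u ∈ S, Relation.ReflTransGen (fun x y => par x = some y) u r := by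
  induction hT with
  | node S r ρ hr hρ h IH =>
    intro u hu
    by_cases hur : u = r
    · exact hur ▸ Relation.ReflTransGen.refl
    · exact (IH u hu hur u (mem_compIn_self u)).tail (hρ u hu hur)

lemma no_cycle_aux {r : V} (hroot : par r = none) :
    ∀ {x : V}, Relation.ReflTransGen (fun x y => par x = some y) x r →
      ¬ Relation.TransGen (fun x y => par x = some y) x x := by
  intro x h
  induction h using Relation.ReflTransGen.head_induction_on with
  | refl =>
    intro hc
    obtain ⟨z, hz, -⟩ := Relation.TransGen.head'_iff.mp hc
    rw [hroot] at hz
    cases hz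
  | @head a c hstep htail ih =>
    intro hc
    obtain ⟨z, hz, hza⟩ := Relation.TransGen.head'_iff.mp hc
    have hzc : z = c := Option.some.inj ((hstep ▸ hz : (some c : Option V) = some z)).symm
    subst hzc
    exact ih (Relation.TransGen.tail' hza hstep)

lemma no_par_cycle {r : V} (hroot : par r = none) (hT : IsSearchTree G par Set.univ r) :
    ∀ x, ¬ Relation.TransGen (fun x y => par x = some y) x x := fun x =>
  no_cycle_aux hroot (tree_chain hT x (Set.mem_univ x))

lemma key_struct {S : Set V} {r : V} (hT : IsSearchTree G par S r)
    (hnc : ∀ x, ¬ Relation.TransGen (fun x y => par x = some y) x x) :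
    subtree par r ⊆ S → (∀ x ∈ S, ∀ y ∈ S, reachIn G S x y) →
    ∀ v ∈ S,
      (∀ x ∈ subtree par v, ∀ y ∈ subtree par v, reachIn G (subtree par v) x y) ∧
      (∀ u ∈ subtree par v, u ≠ v → ∃ c, par c = some v ∧
          compIn G (subtree par v \ {v}) u ⊆ subtree par c ∧ v ∉ subtree par c) := by
  induction hT with
  | node S r ρ hr hρ h IH =>
    intro hsub hconn v hv
    have hSr : subtree par r = S :=
      Set.Subset.antisymm hsub fun u hu => tree_chain (IsSearchTree.node S r ρ hr hρ h) u hu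
    by_cases hvr : v = r
    · subst hvr
      constructor
      · rw [hSr]; exact hconn
      · intro u hu hur
        rw [hSr] at hu
        refine ⟨ρ u, hρ u hu hur, ?_, ?_⟩
        · rw [hSr]
          intro x hx
          exact tree_chain (h u hu hur) x hx
        · intro hmem
          exact hnc v (Relation.TransGen.tail' hmem (hρ u hu hur))
    · have hvC : v ∈ compIn G (S \ {v}) v := mem_compIn_self v
      refine IH v hv hvr ?_ (fun x hx y hy => compIn_conn hx hy) v (mem_compIn_self v)
      -- subtree par (ρ v) ⊆ compIn G (S \ {r}) v
      intro x hx
      have hxρ : Relation.ReflTransGen (fun x y => par x = some y) x (ρ v) := hx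
      have hρvr : par (ρ v) = some r := hρ v hv hvr
      have hxS : x ∈ S := hsub (hxρ.tail hρvr)
      have hxnr : x ≠ r := fun heq =>
        hnc x (Relation.TransGen.tail' hxρ (heq ▸ hρvr))
      have hchainx : Relation.ReflTransGen (fun x y => par x = some y) x (ρ x) :=
        tree_chain (h x hxS hxnr) x (mem_compIn_self x)
      have hρxr : par (ρ x) = some r := hρ x hxS hxnr
      have hru : Relator.RightUnique (fun x y => par x = some y) := by
        intro a b c h1 h2
        exact Option.some.inj ((h1 ▸ h2 : (some b : Option V) = some c))
      have hroots_eq : ρ x = ρ v := by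
        rcases Relation.ReflTransGen.total_of_right_unique hru hchainx hxρ with hc | hc
        · rcases Relation.ReflTransGen.cases_head hc with heq | ⟨z, hz, hzc⟩
          · exact heq
          · have hzr : z = r := Option.some.inj ((hρxr ▸ hz : (some r : Option V) = some z)).symm
            subst hzr
            exact absurd (Relation.TransGen.tail' hzc hρvr) (hnc z)
        · rcases Relation.ReflTransGen.cases_head hc with heq | ⟨z, hz, hzc⟩
          · exact heq.symm
          · have hzr : z = r := Option.some.inj ((hρvr ▸ hz : (some r : Option V) = some z)).symm
            subst hzr
            exact absurd (Relation.TransGen.tail' hzc hρxr) (hnc z)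
      have hρxC : ρ x ∈ compIn G (S \ {r}) x := root_mem (h x hxS hxnr)
      have hρvC : ρ v ∈ compIn G (S \ {r}) v := root_mem (h v hv hvr)
      exact Relation.ReflTransGen.trans hρvC (hroots_eq ▸ reachIn_symm hρxC)

end Aux

/-- A separator node `v` of a 2-cut STT lies on the path in the
underlying tree `G` between the two vertices of `∂(T_v)`. -/
theorem separator_on_path_between_boundary [Fintype V] (G : SimpleGraph V)
    (hG : G.IsTree) (par : V → Option V) (r : V) (hroot : par r = none)
    (hT : IsSearchTree G par Set.univ r) (h2 : TwoCut G par)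
    (v a b : V) (hab : a ≠ b) (hb : bdry G par v = {a, b})
    (w : G.Walk a b) (hw : w.IsPath) :
    v ∈ w.support := by
  classical
  by_contra hv
  have hnc := no_par_cycle hroot hT
  have hconn_univ : ∀ x ∈ (Set.univ : Set V), ∀ y ∈ (Set.univ : Set V),
      reachIn G Set.univ x y := by
    intro x _ y _
    obtain ⟨p⟩ := hG.isConnected x y
    exact reachIn_of_walk p fun z _ => Set.mem_univ z
  obtain ⟨hP1, hP2⟩ :=
    key_struct hT hnc (fun x _ => Set.mem_univ x) hconn_univ v (Set.mem_univ v)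
  set T := subtree par v with hT_def
  have hvT : v ∈ T := Relation.ReflTransGen.refl
  have haB : a ∈ bdry G par v := by rw [hb]; exact Set.mem_insert _ _
  have hbB : b ∈ bdry G par v := by rw [hb]; exact Set.mem_insert_of_mem _ rfl
  obtain ⟨haT, ua, huaT, haua⟩ := haB
  obtain ⟨hbT, ub, hubT, hbub⟩ := hbB
  obtain ⟨P, hPT⟩ : ∃ P : G.Walk ua ub, ∀ x ∈ P.support, x ∈ T := by
    rcases walk_of_reachIn (hP1 ua huaT ub hubT) with heq | hP
    · subst heq
      exact ⟨SimpleGraph.Walk.nil, by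
        intro x hx
        rw [SimpleGraph.Walk.support_nil, List.mem_singleton] at hx
        exact hx ▸ huaT⟩
    · exact hP
  let W : G.Walk a b := SimpleGraph.Walk.cons haua (P.concat hbub.symm)
  have hWsupp : ∀ x ∈ W.support, x = a ∨ x = b ∨ x ∈ T := by
    intro x hx
    simp only [W, SimpleGraph.Walk.support_cons, SimpleGraph.Walk.support_concat,
      List.concat_eq_append, List.mem_cons, List.mem_append, List.mem_singleton] at hx
    rcases hx with rfl | hx | rfl | h
    · exact Or.inl rfl
    · exact Or.inr (Or.inr (hPT x hx))
    · exact Or.inr (Or.inl rfl)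
    · exact absurd h List.not_mem_nil
  have hsab : s(a, b) ∉ W.edges := by
    intro hmem
    simp only [W, SimpleGraph.Walk.edges_cons, SimpleGraph.Walk.edges_concat,
      List.concat_eq_append, List.mem_cons, List.mem_append, List.mem_singleton] at hmem
    rcases hmem with heq | hmem | heq | hmem
    · rw [Sym2.eq_iff] at heq
      rcases heq with ⟨-, heq2⟩ | ⟨-, heq2⟩
      · exact hbT (by rw [heq2]; exact huaT)
      · exact hab heq2.symm
    · exact haT (hPT a (SimpleGraph.Walk.fst_mem_support_of_mem_edges P hmem))
    · rw [Sym2.eq_iff] at heq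
      rcases heq with ⟨heq1, -⟩ | ⟨heq1, -⟩
      · exact haT (by rw [heq1]; exact hubT)
      · exact hab heq1
    · exact absurd hmem List.not_mem_nil
  have huniq := SimpleGraph.isAcyclic_iff_path_unique.mp hG.IsAcyclic
  have hwW : w = (W.toPath : G.Walk a b) :=
    congrArg Subtype.val (huniq ⟨w, hw⟩ W.toPath)
  have hwsupp : ∀ x ∈ w.support, x = a ∨ x = b ∨ x ∈ T := fun x hx =>
    hWsupp x (SimpleGraph.Walk.support_toPath_subset W (hwW ▸ hx))
  have hnadj : ¬ G.Adj a b := by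
    intro hadj
    have h1 : w = SimpleGraph.Walk.cons hadj SimpleGraph.Walk.nil :=
      (congrArg Subtype.val (huniq ⟨w, hw⟩ (SimpleGraph.Path.singleton hadj)))
    have h2 : s(a, b) ∈ w.edges := by
      rw [h1]; simp
    exact hsab (SimpleGraph.Walk.edges_toPath_subset W (hwW ▸ h2))
  -- destructure the path w
  cases w with
  | nil => exact hab rfl
  | @cons _ s _ hadj w₁ =>
    have hpath := hw
    rw [SimpleGraph.Walk.cons_isPath_iff] at hpath
    obtain ⟨hw₁, haw₁⟩ := hpath
    have hsmem : s ∈ (SimpleGraph.Walk.cons hadj w₁).support := by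
      rw [SimpleGraph.Walk.support_cons]
      exact List.mem_cons_of_mem _ (SimpleGraph.Walk.start_mem_support _)
    have hsb : s ≠ b := by rintro rfl; exact hnadj hadj
    have hsa : s ≠ a := fun h => haw₁ (h ▸ SimpleGraph.Walk.start_mem_support w₁)
    have hsT : s ∈ T := by
      rcases hwsupp s hsmem with h | h | h
      · exact absurd h hsa
      · exact absurd h hsb
      · exact h
    have hsv : s ≠ v := by
      rintro rfl
      exact hv hsmem
    -- penultimate vertex
    obtain ⟨t, hbt, q, hq⟩ := SimpleGraph.Walk.exists_eq_cons_of_ne (Ne.symm hsb) w₁.reverse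
    have hrevpath : w₁.reverse.IsPath := hw₁.reverse
    rw [hq, SimpleGraph.Walk.cons_isPath_iff] at hrevpath
    obtain ⟨hqpath, hbq⟩ := hrevpath
    have hqsub : ∀ x ∈ q.support, x ∈ w₁.support := by
      intro x hx
      have : x ∈ w₁.reverse.support := by
        rw [hq, SimpleGraph.Walk.support_cons]
        exact List.mem_cons_of_mem _ hx
      rwa [SimpleGraph.Walk.support_reverse, List.mem_reverse] at this
    have hqT : ∀ x ∈ q.support, x ∈ T \ {v} := by
      intro x hx
      have hxw : x ∈ (SimpleGraph.Walk.cons hadj w₁).support := by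
        rw [SimpleGraph.Walk.support_cons]
        exact List.mem_cons_of_mem _ (hqsub x hx)
      have hxa : x ≠ a := fun h => haw₁ (h ▸ hqsub x hx)
      have hxb : x ≠ b := fun h => hbq (h ▸ hx)
      have hxv : x ≠ v := fun h => hv (h ▸ hxw)
      rcases hwsupp x hxw with h | h | h
      · exact absurd h hxa
      · exact absurd h hxb
      · exact ⟨h, hxv⟩
    have hqreach : reachIn G (T \ {v}) t s := reachIn_of_walk q hqT
    have htTv : t ∈ T \ {v} := hqT t (SimpleGraph.Walk.start_mem_support q)
    -- the child subtree
    obtain ⟨c, hcpar, hDc, hvc⟩ := hP2 s hsT hsv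
    have hsc : s ∈ subtree par c := hDc (mem_compIn_self s)
    have htc : t ∈ subtree par c := hDc (reachIn_symm hqreach)
    -- a neighbor of v inside the child subtree
    obtain ⟨x1, hvx1, hx1c⟩ : ∃ x1, G.Adj v x1 ∧ x1 ∈ subtree par c := by
      rcases walk_of_reachIn (hP1 v hvT s hsT) with heq | ⟨p, hp⟩
      · exact absurd heq.symm hsv
      · obtain ⟨x1, hvx1, q₃, hq₃⟩ :=
          SimpleGraph.Walk.exists_eq_cons_of_ne (fun h => hsv h.symm) (p.toPath : G.Walk v s)
        have hppath : (p.toPath : G.Walk v s).IsPath := p.toPath.2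
        rw [hq₃, SimpleGraph.Walk.cons_isPath_iff] at hppath
        obtain ⟨hq₃path, hvq₃⟩ := hppath
        have hq₃T : ∀ x ∈ q₃.support, x ∈ T \ {v} := by
          intro x hx
          have hxp : x ∈ (p.toPath : G.Walk v s).support := by
            rw [hq₃, SimpleGraph.Walk.support_cons]
            exact List.mem_cons_of_mem _ hx
          have hxT : x ∈ T := hp x (SimpleGraph.Walk.support_toPath_subset p hxp)
          exact ⟨hxT, fun h => hvq₃ (h ▸ hx)⟩
        have : reachIn G (T \ {v}) x1 s := reachIn_of_walk q₃ hq₃T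
        exact ⟨x1, hvx1, hDc (reachIn_symm this)⟩
    have hcT : subtree par c ⊆ T := fun x hx => Relation.ReflTransGen.tail hx hcpar
    have hbdry : {a, b, v} ⊆ bdry G par c := by
      intro x hx
      rcases hx with rfl | rfl | rfl
      · exact ⟨fun h => haT (hcT h), s, hsc, hadj⟩
      · exact ⟨fun h => hbT (hcT h), t, htc, hbt⟩
      · exact ⟨hvc, x1, hx1c, hvx1⟩
    have hav : a ≠ v := fun h => haT (show a ∈ subtree par v by rw [h]; exact hvT)
    have hbv : b ≠ v := fun h => hbT (show b ∈ subtree par v by rw [h]; exact hvT)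
    have h3 : ({a, b, v} : Set V).ncard = 3 := by
      rw [Set.ncard_insert_of_notMem (by simp [hab, hav]),
        Set.ncard_insert_of_notMem (by simp [hbv]), Set.ncard_singleton]
    have hle := Set.ncard_le_ncard hbdry (Set.toFinite _)
    have := h2 c
    omega
end

section
/- Let v be a node in a 2-cut STT T with parent p and grandparent g, where g has a parent h and grandparent i, and suppose g, h, and i are all separator nodes. Then the splay step at g preserves the 2-cut property. -/
open SimpleGraph

variable {V : Type*}

/-! ### Generic facts about `reachIn` and `compIn` -/

section Reach

variable {G : SimpleGraph V} {S S' : Set V} {a b c u v w : V}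

lemma reachIn.refl : reachIn G S a a := Relation.ReflTransGen.refl

lemma reachIn.single (ha : a ∈ S) (hb : b ∈ S) (h : G.Adj a b) : reachIn G S a b :=
  Relation.ReflTransGen.single ⟨ha, hb, h⟩

lemma reachIn.trans (h1 : reachIn G S a b) (h2 : reachIn G S b c) : reachIn G S a c :=
  Relation.ReflTransGen.trans h1 h2

lemma reachIn.symm (h : reachIn G S a b) : reachIn G S b a := by
  induction h with
  | refl => exact .refl
  | tail hab h ih => exact Relation.ReflTransGen.head ⟨h.2.1, h.1, h.2.2.symm⟩ ih

lemma reachIn.mono (hSS : S ⊆ S') (h : reachIn G S a b) : reachIn G S' a b := by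
  induction h with
  | refl => exact .refl
  | tail hab h ih => exact ih.tail ⟨hSS h.1, hSS h.2.1, h.2.2⟩

lemma reachIn.mem_right (h : reachIn G S a b) : b = a ∨ b ∈ S := by
  induction h with
  | refl => exact Or.inl rfl
  | tail hab h ih => exact Or.inr h.2.1

lemma mem_compIn_self_s13 : a ∈ compIn G S a := reachIn.refl

lemma compIn_subset (ha : a ∈ S) : compIn G S a ⊆ S := by
  intro u hu
  rcases (reachIn.mem_right hu) with h | h
  · exact h ▸ ha
  · exact h

lemma compIn_eq_of_mem (hb : b ∈ compIn G S a) : compIn G S a = compIn G S b := by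
  ext u
  constructor
  · intro hu; exact (reachIn.symm hb).trans hu
  · intro hu; exact reachIn.trans hb hu

/-- reach within `S` implies reach within the component itself. -/
lemma reachIn_compIn (h : reachIn G S a b) : reachIn G (compIn G S a) a b := by
  induction h with
  | refl => exact .refl
  | @tail x y hax hxy ih =>
      exact ih.tail ⟨hax, hax.tail hxy, hxy.2.2⟩

/-- components are `connIn`: any two members are connected within the component. -/
lemma compIn_conn_s13 (hu : u ∈ compIn G S a) (hv : v ∈ compIn G S a) :
    reachIn G (compIn G S a) u v := by
  have h1 : reachIn G (compIn G S a) a u := reachIn_compIn hu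
  have h2 : reachIn G (compIn G S a) a v := reachIn_compIn hv
  exact h1.symm.trans h2

/-- boundary of a set -/
def setBdry (G : SimpleGraph V) (S : Set V) : Set V :=
  {x | x ∉ S ∧ ∃ u ∈ S, G.Adj x u}

lemma bdry_eq_setBdry (par : V → Option V) (v : V) :
    bdry G par v = setBdry G (subtree par v) := rfl

/-- If `C ⊆ S` is connected, contains `u`, and has no `G`-edge to `S \ C`,
then `C` is the component of `u` in `S`. -/
lemma compIn_eq_self (hC : C ⊆ S) (hu : u ∈ C)
    (hconn : ∀ a ∈ C, ∀ b ∈ C, reachIn G C a b)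
    (hbd : ∀ z ∈ setBdry G C, z ∉ S) :
    compIn G S u = C := by
  apply Set.Subset.antisymm
  · intro z hz
    induction hz with
    | refl => exact hu
    | @tail x y hux hxy ih =>
        by_contra hy
        exact hbd y ⟨hy, x, ih, hxy.2.2.symm⟩ hxy.2.1
  · intro z hz
    exact (hconn u hu z hz).mono hC

end Reach

/-! ### Deterministic parent-chain facts -/

section Chains

variable {par : V → Option V} {a b c u v w r : V}

lemma isAnc.refl : isAnc par a a := Relation.ReflTransGen.refl

lemma isAnc.step (h : par u = some w) : isAnc par w u := Relation.ReflTransGen.single h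

lemma mem_subtree_self : v ∈ subtree par v := isAnc.refl

lemma subtree_trans (h1 : u ∈ subtree par w) (h2 : w ∈ subtree par v) :
    u ∈ subtree par v := Relation.ReflTransGen.trans h1 h2

lemma subtree_subset_of_par (h : par u = some w) : subtree par u ⊆ subtree par w :=
  fun _ hz => Relation.ReflTransGen.trans hz (isAnc.step h)

lemma mem_subtree_of_par (h : par u = some w) : u ∈ subtree par w := isAnc.step h

/-- From `u`, chains are deterministic: destinations are comparable. -/
lemma isAnc_total (h1 : isAnc par b a) (h2 : isAnc par c a) :
    isAnc par c b ∨ isAnc par b c := by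
  unfold isAnc at *
  induction h1 using Relation.ReflTransGen.head_induction_on with
  | refl => exact Or.inl h2
  | @head x y hxy hyb ih =>
      rcases Relation.ReflTransGen.cases_head h2 with rfl | ⟨z, hz, hzc⟩
      · exact Or.inr (Relation.ReflTransGen.head hxy hyb)
      · rw [hxy] at hz
        cases Option.some_injective _ hz
        exact ih hzc

/-- peel the first step of a nontrivial chain -/
lemma isAnc_peel (h : isAnc par w u) (hne : u ≠ w) (hp : par u = some b) :
    isAnc par w b := by
  rcases Relation.ReflTransGen.cases_head h with rfl | ⟨z, hz, hzc⟩
  · exact absurd rfl hne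
  · rw [hp] at hz; cases Option.some_injective _ hz; exact hzc

private def parF (par : V → Option V) : V → V := fun u => (par u).getD u

private lemma isAnc_iterate (h : isAnc par a v) : ∃ n, (parF par)^[n] v = a := by
  induction h with
  | refl => exact ⟨0, rfl⟩
  | @tail x y hx hxy ih =>
      obtain ⟨n, hn⟩ := ih
      exact ⟨n + 1, by rw [Function.iterate_succ_apply', hn, parF, hxy]; rfl⟩

/-- No nontrivial cycles when everyone reaches the root and the root stops. -/
lemma isAnc_antisymm (hroot : par r = none) (hreach : ∀ u, isAnc par r u)
    (h1 : isAnc par a b) (h2 : isAnc par b a) : a = b := by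
  have hFr : parF par r = r := by simp [parF, hroot]
  have hFrn : ∀ n, (parF par)^[n] r = r := fun n => Function.iterate_fixed hFr n
  obtain ⟨n, hn⟩ := isAnc_iterate h1
  obtain ⟨m, hm⟩ := isAnc_iterate h2
  obtain ⟨k, hk⟩ := isAnc_iterate (hreach b)
  -- (parF)^[n+m] b = b, and (parF)^[k] b = r
  have hcyc : (parF par)^[m + n] b = b := by
    rw [Function.iterate_add_apply, hn, hm]
  have hper : ∀ j, (parF par)^[j * (m + n)] b = b := by
    intro j
    induction j with
    | zero => simp
    | succ j ih => rw [Nat.succ_mul, Function.iterate_add_apply, hcyc, ih]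
  by_cases hmn : m + n = 0
  · obtain ⟨hm0, hn0⟩ := Nat.add_eq_zero.mp hmn
    subst hm0; subst hn0
    simp only [Function.iterate_zero_apply] at hm hn
    exact hm
  · have h1' : (parF par)^[(k + 1) * (m + n)] b = b := hper _
    have hge : k ≤ (k + 1) * (m + n) := by
      calc k ≤ k + 1 := Nat.le_succ k
        _ ≤ (k + 1) * (m + n) := Nat.le_mul_of_pos_right _ (Nat.pos_of_ne_zero hmn)
    have : (parF par)^[(k + 1) * (m + n)] b = r := by
      obtain ⟨d, hd⟩ := Nat.exists_eq_add_of_le hge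
      rw [hd, Nat.add_comm, Function.iterate_add_apply, hk, hFrn]
    have hbr : b = r := by rw [← h1', this]
    subst hbr
    -- now a is an ancestor of b = r and r reaches a; chains from r are trivial
    rcases Relation.ReflTransGen.cases_head h1 with rfl | ⟨z, hz, _⟩
    · rfl
    · rw [hroot] at hz; exact absurd hz (by simp)

lemma not_mem_subtree_of_par (hroot : par r = none) (hreach : ∀ u, isAnc par r u)
    (h : par u = some w) : w ∉ subtree par u := by
  intro hw
  have := isAnc_antisymm hroot hreach hw (mem_subtree_of_par h)
  subst this
  -- par u = some u : cycle
  have : isAnc par r u := hreach u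
  obtain ⟨n, hn⟩ := isAnc_iterate this
  have : ∀ n, (parF par)^[n] u = u := by
    intro n; induction n with
    | zero => rfl
    | succ n ih => rw [Function.iterate_succ_apply', ih, parF, h]; rfl
  rw [this n] at hn
  subst hn
  rw [hroot] at h; exact absurd h (by simp)

/-- every non-root member of a subtree lies in the subtree of a child. -/
lemma subtree_child (h : u ∈ subtree par v) (hne : u ≠ v) :
    ∃ c, par c = some v ∧ u ∈ subtree par c := by
  unfold subtree isAnc at h
  induction h using Relation.ReflTransGen.head_induction_on with
  | refl => exact absurd rfl hne
  | @head x y hxy hyv ih =>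
      by_cases hy : y = v
      · subst hy; exact ⟨x, hxy, mem_subtree_self⟩
      · obtain ⟨c, hc1, hc2⟩ := ih hy
        exact ⟨c, hc1, Relation.ReflTransGen.head hxy hc2⟩

end Chains

/-! ### Structural facts about search trees -/

section Struct

variable {G : SimpleGraph V} {par : V → Option V} {S : Set V} {s r u v w : V}

def Closed2 (par : V → Option V) (S : Set V) : Prop :=
  ∀ u a, par u = some a → a ∈ S → u ∈ S

def RootPar (par : V → Option V) (S : Set V) (s : V) : Prop :=
  par s = none ∨ ∃ z, par s = some z ∧ z ∉ S

def ConnIn (G : SimpleGraph V) (S : Set V) : Prop :=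
  ∀ a ∈ S, ∀ b ∈ S, reachIn G S a b

lemma IsSearchTree.elim' (hT : IsSearchTree G par S s) :
    s ∈ S ∧ ∃ ρ : V → V, (∀ v ∈ S, v ≠ s → par (ρ v) = some s) ∧
      ∀ v ∈ S, v ≠ s → IsSearchTree G par (compIn G (S \ {s}) v) (ρ v) := by
  cases hT with
  | node S r ρ hr hρ h => exact ⟨hr, ρ, hρ, h⟩

lemma IsSearchTree.parent_mem (hT : IsSearchTree G par S s) :
    ∀ u ∈ S, u ≠ s → ∃ pu, par u = some pu ∧ pu ∈ S := by
  induction hT with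
  | node S r ρ hr hρ h ih =>
      intro u hu hur
      by_cases hroot : u = ρ u
      · exact ⟨r, by rw [hroot]; exact hρ u hu hur, hr⟩
      · obtain ⟨pu, h1, h2⟩ := ih u hu hur u mem_compIn_self_s13 hroot
        have : compIn G (S \ {r}) u ⊆ S \ {r} := compIn_subset ⟨hu, hur⟩
        exact ⟨pu, h1, (this h2).1⟩

lemma IsSearchTree.reach_root (hT : IsSearchTree G par S s) :
    ∀ u ∈ S, isAnc par s u := by
  induction hT with
  | node S r ρ hr hρ h ih =>
      intro u hu
      by_cases hur : u = r
      · subst hur; exact isAnc.refl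
      · have h1 : isAnc par (ρ u) u := ih u hu hur u mem_compIn_self_s13
        exact h1.trans (isAnc.step (hρ u hu hur))

lemma searchTree_main [Fintype V] :
    ∀ n (S : Set V) (s : V), S.ncard ≤ n → IsSearchTree G par S s →
      Closed2 par S → RootPar par S s → ConnIn G S →
      subtree par s = S ∧ ∀ v ∈ S, (ConnIn G (subtree par v) ∧
        ∀ w, par v = some w → w ∈ S →
          subtree par v = compIn G (subtree par w \ {w}) v) := by
  intro n
  induction n with
  | zero =>
      intro S s hcard hT _ _ _
      exfalso
      obtain ⟨hr, -⟩ := hT.elim'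
      have : 0 < S.ncard := (Set.ncard_pos (Set.toFinite _)).mpr ⟨s, hr⟩
      omega
  | succ n ih =>
      intro S s hcard hT hC2 hRP hconn
      obtain ⟨hr, ρ, hρ, h⟩ := hT.elim'
      -- subtree par s = S
      have hsub : subtree par s = S := by
        apply Set.Subset.antisymm
        · intro u hu
          unfold subtree isAnc at hu
          induction hu using Relation.ReflTransGen.head_induction_on with
          | refl => exact hr
          | @head x y hxy _ ihy => exact hC2 x y hxy ihy
        · intro u hu
          exact IsSearchTree.reach_root hT u hu
      -- facts about each component
      have hcomp : ∀ v ∈ S, v ≠ s →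
          subtree par (ρ v) = compIn G (S \ {s}) v ∧
          ∀ u ∈ compIn G (S \ {s}) v, (ConnIn G (subtree par u) ∧
            ∀ w, par u = some w → w ∈ compIn G (S \ {s}) v →
              subtree par u = compIn G (subtree par w \ {w}) u) := by
        intro v hv hvr
        set Sv := compIn G (S \ {s}) v with hSv
        have hTv : IsSearchTree G par Sv (ρ v) := h v hv hvr
        have hSvsub : Sv ⊆ S \ {s} := compIn_subset ⟨hv, hvr⟩
        have hC2v : Closed2 par Sv := by
          intro u a hpa haSv
          have haS : a ∈ S \ {s} := hSvsub haSv
          have huS : u ∈ S := hC2 u a hpa haS.1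
          have hur : u ≠ s := by
            rintro rfl
            rcases hRP with h0 | ⟨z, hz1, hz2⟩
            · rw [h0] at hpa; exact absurd hpa (by simp)
            · rw [hz1] at hpa; cases Option.some_injective _ hpa
              exact hz2 haS.1
          by_cases hru : u = ρ u
          · exfalso
            have : par u = some s := by rw [hru]; exact hρ u huS hur
            rw [this] at hpa; cases Option.some_injective _ hpa
            exact haS.2 rfl
          · obtain ⟨pu, hp1, hp2⟩ :=
              IsSearchTree.parent_mem (h u huS hur) u mem_compIn_self_s13 hru
            rw [hpa] at hp1; cases Option.some_injective _ hp1
            have e1 : compIn G (S \ {s}) u = compIn G (S \ {s}) a :=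
              compIn_eq_of_mem hp2
            have e2 : compIn G (S \ {s}) v = compIn G (S \ {s}) a :=
              compIn_eq_of_mem haSv
            have h3 : u ∈ compIn G (S \ {s}) u := mem_compIn_self_s13
            rw [e1, ← e2] at h3
            exact h3
        have hRPv : RootPar par Sv (ρ v) := by
          refine Or.inr ⟨s, hρ v hv hvr, fun hrc => (hSvsub hrc).2 rfl⟩
        have hconnv : ConnIn G Sv := fun a ha b hb => compIn_conn_s13 ha hb
        have hcardv : Sv.ncard ≤ n := by
          have h1 : Sv.ncard ≤ (S \ {s}).ncard :=
            Set.ncard_le_ncard hSvsub (Set.toFinite _)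
          have h2 : (S \ {s}).ncard < S.ncard :=
            Set.ncard_diff_singleton_lt_of_mem hr (Set.toFinite _)
          omega
        obtain ⟨ih1, ih2⟩ := ih Sv (ρ v) hcardv hTv hC2v hRPv hconnv
        exact ⟨ih1, ih2⟩
      refine ⟨hsub, ?_⟩
      intro v hv
      by_cases hvr : v = s
      · subst hvr
        constructor
        · rw [hsub]; exact hconn
        · intro w hw hwS
          exfalso
          rcases hRP with h0 | ⟨z, hz1, hz2⟩
          · rw [h0] at hw; exact absurd hw (by simp)
          · rw [hz1] at hw; cases Option.some_injective _ hw; exact hz2 hwS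
      · obtain ⟨hc1, hc2⟩ := hcomp v hv hvr
        by_cases hvρ : v = ρ v
        · constructor
          · rw [← hvρ] at hc1; rw [hc1]
            exact fun a ha b hb => compIn_conn_s13 ha hb
          · intro w hw hwS
            have hpv : par v = some s := by rw [hvρ]; exact hρ v hv hvr
            rw [hpv] at hw; cases Option.some_injective _ hw
            rw [← hvρ] at hc1; rw [hc1, hsub]
        · have hvc : v ∈ compIn G (S \ {s}) v := mem_compIn_self_s13
          obtain ⟨hc3, hc4⟩ := hc2 v hvc
          refine ⟨hc3, fun w hw hwS => ?_⟩
          obtain ⟨pu, hp1, hp2⟩ :=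
            IsSearchTree.parent_mem (h v hv hvr) v mem_compIn_self_s13 hvρ
          rw [hw] at hp1; cases Option.some_injective _ hp1
          exact hc4 w hw hp2

end Struct

/-! ### Packaged facts -/

section Facts

variable {G : SimpleGraph V} {par : V → Option V} {S : Set V} {r u v w z c : V}

structure STTFacts (G : SimpleGraph V) (par : V → Option V) (r : V) : Prop where
  root_none : par r = none
  reach : ∀ u, isAnc par r u
  conn : ∀ v, ConnIn G (subtree par v)
  char : ∀ v w, par v = some w → subtree par v = compIn G (subtree par w \ {w}) v

lemma connIn_univ (hc : G.Connected) : ConnIn G (Set.univ : Set V) := by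
  intro a _ b _
  obtain ⟨wk⟩ := hc a b
  induction wk with
  | nil => exact reachIn.refl
  | cons h p ih => exact Relation.ReflTransGen.head ⟨trivial, trivial, h⟩ (ih trivial trivial)

lemma sttFacts_of [Fintype V] (hc : G.Connected) (hroot : par r = none)
    (hT : IsSearchTree G par Set.univ r) : STTFacts G par r := by
  obtain ⟨h1, h2⟩ := searchTree_main (Set.univ : Set V).ncard Set.univ r le_rfl hT
    (fun _ _ _ _ => trivial) (Or.inl hroot) (connIn_univ hc)
  refine ⟨hroot, fun u => ?_, fun v => (h2 v trivial).1,
    fun v w hw => (h2 v trivial).2 w hw trivial⟩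
  have : u ∈ subtree par r := by rw [h1]; trivial
  exact this

namespace STTFacts

variable (hF : STTFacts G par r)
include hF

lemma antisymm (h1 : isAnc par a b) (h2 : isAnc par b a) : a = b :=
  isAnc_antisymm hF.root_none hF.reach h1 h2

lemma par_not_mem (h : par u = some w) : w ∉ subtree par u :=
  not_mem_subtree_of_par hF.root_none hF.reach h

lemma par_ne (h : par u = some w) : u ≠ w := by
  rintro rfl
  exact hF.par_not_mem h mem_subtree_self

lemma subtree_ssub (h : par u = some w) : subtree par u ⊆ subtree par w \ {w} := by
  intro z hz
  refine ⟨subtree_subset_of_par h hz, ?_⟩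
  rintro rfl
  exact hF.par_not_mem h hz

set_option linter.unusedSectionVars false in
/-- the parent is adjacent to the subtree -/
lemma exists_adj_comp {S : Set V} (hconn : ∀ a ∈ S, ∀ b ∈ S, reachIn G S a b)
    (hw : w ∈ S) (hu : u ∈ S) :
    u = w ∨ ∃ z ∈ compIn G (S \ {w}) u, G.Adj w z := by
  have hr : reachIn G S u w := hconn u hu w hw
  clear hu hw hconn
  induction hr using Relation.ReflTransGen.head_induction_on with
  | refl => exact Or.inl rfl
  | @head x b hxb hbw ih =>
      by_cases hxw : x = w
      · exact Or.inl hxw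
      · right
        by_cases hbww : b = w
        · subst hbww
          exact ⟨x, mem_compIn_self_s13, hxb.2.2.symm⟩
        · rcases ih with rfl | ⟨z, hz, hadj⟩
          · exact absurd rfl hbww
          · have hmem : b ∈ compIn G (S \ {w}) x :=
              reachIn.single ⟨hxb.1, hxw⟩ ⟨hxb.2.1, hbww⟩ hxb.2.2
            rw [compIn_eq_of_mem hmem]
            exact ⟨z, hz, hadj⟩

lemma parent_mem_bdry (h : par u = some w) : w ∈ bdry G par u := by
  have hchar := hF.char u w h
  have hwu : w ∉ subtree par u := hF.par_not_mem h
  have hum : u ∈ subtree par w := mem_subtree_of_par h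
  have := hF.exists_adj_comp (S := subtree par w) (hF.conn w) mem_subtree_self hum
  rcases this with rfl | ⟨z, hz, hadj⟩
  · exact absurd rfl (hF.par_ne h)
  · rw [← hchar] at hz
    exact ⟨hwu, z, hz, hadj⟩

lemma bdry_subset (h : par u = some w) :
    bdry G par u ⊆ insert w (bdry G par w) := by
  intro z hz
  obtain ⟨hzn, a, ha, hadj⟩ := hz
  by_cases hzT : z ∈ subtree par w
  · left
    by_contra hzw
    have haT : a ∈ subtree par w \ {w} := hF.subtree_ssub h ha
    have hzT' : z ∈ subtree par w \ {w} := ⟨hzT, hzw⟩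
    have ha' : a ∈ compIn G (subtree par w \ {w}) u := by
      rw [← hF.char u w h]; exact ha
    have hz' : z ∈ compIn G (subtree par w \ {w}) a :=
      reachIn.single haT hzT' hadj.symm
    have hz2 : z ∈ compIn G (subtree par w \ {w}) u := by
      rw [compIn_eq_of_mem ha']; exact hz'
    rw [← hF.char u w h] at hz2
    exact hzn hz2
  · right
    exact ⟨hzT, a, subtree_subset_of_par h ha, hadj⟩

lemma children_disjoint (hc : par c = some v) (hc' : par c' = some v) (hne : c ≠ c') :
    subtree par c ∩ subtree par c' = ∅ := by
  ext z
  simp only [Set.mem_inter_iff, Set.mem_empty_iff_false, iff_false, not_and]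
  intro h1 h2
  rcases isAnc_total h1 h2 with hA | hA
  · exact hF.par_not_mem hc' (isAnc_peel hA hne hc)
  · exact hF.par_not_mem hc (isAnc_peel hA (Ne.symm hne) hc')

end STTFacts

end Facts

/-! ### Tree fact: at most one neighbour in a connected set -/

section TreeFact

variable {G : SimpleGraph V} {S : Set V} {a b z u1 u2 : V}

lemma walk_of_reachIn_s13 (h : reachIn G S a b) (ha : a ∈ S) :
    ∃ w : G.Walk a b, ∀ x ∈ w.support, x ∈ S := by
  induction h with
  | refl => exact ⟨SimpleGraph.Walk.nil, by simp [ha]⟩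
  | @tail x y hax hxy ih =>
      obtain ⟨w, hw⟩ := ih
      refine ⟨w.concat hxy.2.2, ?_⟩
      intro t ht
      rw [SimpleGraph.Walk.support_concat] at ht
      rcases List.mem_append.mp ht with h1 | h1
      · exact hw t h1
      · rw [List.mem_singleton] at h1; exact h1 ▸ hxy.2.1

lemma tree_unique_nbr (hG : G.IsTree)
    (hconn : ∀ a ∈ S, ∀ b ∈ S, reachIn G S a b) (hz : z ∉ S)
    (h1 : u1 ∈ S) (h2 : u2 ∈ S) (ha1 : G.Adj z u1) (ha2 : G.Adj z u2) :
    u1 = u2 := by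
  classical
  obtain ⟨w, hw⟩ := walk_of_reachIn_s13 (hconn u1 h1 u2 h2) h1
  have hsupp : ∀ x ∈ w.toPath.1.support, x ∈ S := fun x hx =>
    hw x (SimpleGraph.Walk.support_toPath_subset w hx)
  have hzp : z ∉ w.toPath.1.support := fun hc => hz (hsupp z hc)
  have hpath1 : (SimpleGraph.Walk.cons ha1 w.toPath.1).IsPath :=
    (w.toPath.2.cons hzp)
  have hpath2 : (SimpleGraph.Walk.cons ha2 (SimpleGraph.Walk.nil)).IsPath := by
    apply SimpleGraph.Walk.IsPath.cons SimpleGraph.Walk.IsPath.nil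
    simp [ha2.ne]
  obtain ⟨p, -, hup⟩ := hG.existsUnique_path z u2
  have e1 := hup _ hpath1
  have e2 := hup _ hpath2
  have heq : (SimpleGraph.Walk.cons ha1 w.toPath.1) =
      (SimpleGraph.Walk.cons ha2 (SimpleGraph.Walk.nil)) := e1.trans e2.symm
  have hsup := congrArg SimpleGraph.Walk.support heq
  rw [SimpleGraph.Walk.support_cons, SimpleGraph.Walk.support_cons,
    SimpleGraph.Walk.support_nil, SimpleGraph.Walk.support_eq_cons w.toPath.1] at hsup
  simp only [List.cons.injEq] at hsup
  exact hsup.2.1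

end TreeFact

/-! ### Chain transfer between parent maps -/

section Transfer

variable {par par1 : V → Option V} {R : Set V} {w : V}

lemma isAnc_congr
    (hpar : ∀ a ∈ R, a ≠ w → isAnc par w a → par1 a = par a)
    (hmem : ∀ a ∈ R, a ≠ w → ∀ b, par a = some b → isAnc par w b → b ∈ R) :
    ∀ a ∈ R, isAnc par w a → isAnc par1 w a := by
  intro a haR ha
  revert haR
  unfold isAnc at ha
  induction ha using Relation.ReflTransGen.head_induction_on with
  | refl => intro _; exact isAnc.refl
  | @head c b hcb hbw ih =>
      intro hcR
      by_cases hcw : c = w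
      · subst hcw; exact isAnc.refl
      · have hchain : isAnc par w c := Relation.ReflTransGen.head hcb hbw
        have hbR : b ∈ R := hmem c hcR hcw b hcb hbw
        have h1 : par1 c = some b := by rw [hpar c hcR hcw hchain]; exact hcb
        exact Relation.ReflTransGen.head h1 (ih hbR)

end Transfer

/-! ### The effect of a rotation on subtrees -/

section Rot
set_option linter.unusedSectionVars false

variable {G : SimpleGraph V} {par : V → Option V} {r x p : V}

/-- ancestors of `u` -/
def ancSet (par : V → Option V) (u : V) : Set V := {w | isAnc par w u}

lemma mem_ancSet_iff {u w : V} : w ∈ ancSet par u ↔ u ∈ subtree par w := Iff.rfl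

/-- the union of subtrees of the children of `x` that get moved by the rotation -/
def Mstar (G : SimpleGraph V) (par : V → Option V) (x p : V) : Set V :=
  {u | ∃ c, par c = some x ∧ p ∈ bdry G par c ∧ u ∈ subtree par c}

open Classical in
noncomputable def phi (G : SimpleGraph V) (par : V → Option V) (x p u : V) : Set V :=
  if u ∈ Mstar G par x p then ancSet par u
  else if u ∈ subtree par p \ subtree par x then ancSet par u ∪ {x}
  else if u ∈ subtree par x then ancSet par u \ {p}
  else ancSet par u

lemma ancSet_step {u b : V} (h : par u = some b) : ancSet par u = insert u (ancSet par b) := by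
  ext w
  simp only [ancSet, Set.mem_setOf_eq, Set.mem_insert_iff]
  constructor
  · intro hw
    rcases Relation.ReflTransGen.cases_head hw with h1 | ⟨z, hz, hzc⟩
    · exact Or.inl h1.symm
    · rw [h] at hz; cases Option.some_injective _ hz; exact Or.inr hzc
  · rintro (rfl | hw)
    · exact isAnc.refl
    · exact Relation.ReflTransGen.head h hw

variable (hF : STTFacts G par r) (hxp : par x = some p)
include hF hxp

lemma rot_ne_xp : x ≠ p := hF.par_ne hxp

lemma rot_p_not_x : par p ≠ some x := by
  intro h
  have h1 : x ∈ subtree par p := mem_subtree_of_par hxp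
  have h2 : p ∈ subtree par x := mem_subtree_of_par h
  exact hF.par_ne hxp (hF.antisymm h2 h1)

lemma mstar_subset : Mstar G par x p ⊆ subtree par x \ {x} := by
  rintro u ⟨c, hc, -, hu⟩
  exact hF.subtree_ssub hc hu

lemma mstar_child {u : V} (hu : u ∈ Mstar G par x p) (hpu : par u = some x) :
    p ∈ bdry G par u := by
  obtain ⟨c, hc, hbd, huc⟩ := hu
  by_cases hne : u = c
  · subst hne; exact hbd
  · exfalso
    have := hF.children_disjoint hpu hc hne
    have : u ∈ subtree par u ∩ subtree par c := ⟨mem_subtree_self, huc⟩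
    rw [hF.children_disjoint hpu hc hne] at this
    exact this

lemma rot_at_x : rotate G par x p x = par p := by simp [rotate]

lemma rot_at_p : rotate G par x p p = some x := by
  have := rot_ne_xp hF hxp
  simp [rotate, Ne.symm this]

lemma rot_at_moved {c : V} (hc : par c = some x) (hbd : p ∈ bdry G par c) :
    rotate G par x p c = some p := by
  have hcx : c ≠ x := hF.par_ne hc
  have hcp : c ≠ p := by
    rintro rfl
    exact rot_p_not_x hF hxp hc
  simp [rotate, hcx, hcp, hc, hbd]

lemma rot_at_other {u : V} (hux : u ≠ x) (hup : u ≠ p)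
    (hmov : ¬(par u = some x ∧ p ∈ bdry G par u)) :
    rotate G par x p u = par u := by
  simp only [rotate, if_neg hux, if_neg hup, if_neg hmov]

lemma tx_sub_tp : subtree par x ⊆ subtree par p := subtree_subset_of_par hxp

lemma x_not_mstar : x ∉ Mstar G par x p := fun h => (mstar_subset hF hxp h).2 rfl

lemma p_not_tx : p ∉ subtree par x := hF.par_not_mem hxp

lemma p_not_mstar : p ∉ Mstar G par x p := fun h => p_not_tx hF hxp (mstar_subset hF hxp h).1

lemma phi_mstar {u : V} (h : u ∈ Mstar G par x p) :
    phi G par x p u = ancSet par u := if_pos h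

lemma phi_mid {u : V} (h1 : u ∉ Mstar G par x p)
    (h2 : u ∈ subtree par p \ subtree par x) :
    phi G par x p u = ancSet par u ∪ {x} := by
  rw [phi, if_neg h1, if_pos h2]

lemma phi_tx {u : V} (h1 : u ∉ Mstar G par x p) (h3 : u ∈ subtree par x) :
    phi G par x p u = ancSet par u \ {p} := by
  rw [phi, if_neg h1, if_neg (fun hc => hc.2 h3), if_pos h3]

lemma phi_out {u : V} (h : u ∉ subtree par p) :
    phi G par x p u = ancSet par u := by
  have h3 : u ∉ subtree par x := fun hc => h (tx_sub_tp hF hxp hc)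
  have h1 : u ∉ Mstar G par x p := fun hc => h3 (mstar_subset hF hxp hc).1
  rw [phi, if_neg h1, if_neg (fun hc => h hc.1), if_neg h3]

lemma phi_self {u : V} : u ∈ phi G par x p u := by
  by_cases h1 : u ∈ Mstar G par x p
  · rw [phi_mstar hF hxp h1]; exact mem_subtree_self
  · by_cases h2 : u ∈ subtree par p \ subtree par x
    · rw [phi_mid hF hxp h1 h2]; exact Or.inl mem_subtree_self
    · by_cases h3 : u ∈ subtree par x
      · rw [phi_tx hF hxp h1 h3]
        exact ⟨mem_subtree_self, fun hc => p_not_tx hF hxp (hc ▸ h3)⟩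
      · have h4 : u ∉ subtree par p := fun hc => h2 ⟨hc, h3⟩
        rw [phi_out hF hxp h4]; exact mem_subtree_self

lemma phi_step {u b : V} (h : rotate G par x p u = some b) :
    phi G par x p b ⊆ phi G par x p u := by
  by_cases hux : u = x
  · -- u = x, b = q := par p
    subst hux
    rw [rot_at_x hF hxp] at h
    have hq : b ∉ subtree par p := hF.par_not_mem h
    rw [phi_out hF hxp hq, phi_tx hF hxp (x_not_mstar hF hxp) mem_subtree_self]
    intro w hw
    refine ⟨?_, ?_⟩
    · rw [ancSet_step hxp, ancSet_step h]
      exact Set.mem_insert_of_mem _ (Set.mem_insert_of_mem _ hw)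
    · rintro rfl
      exact hq hw
  · by_cases hup : u = p
    · -- u = p, b = x
      subst hup
      rw [rot_at_p hF hxp] at h
      cases Option.some_injective _ h
      rw [phi_tx hF hxp (x_not_mstar hF hxp) mem_subtree_self,
        phi_mid hF hxp (p_not_mstar hF hxp) ⟨mem_subtree_self, p_not_tx hF hxp⟩]
      intro w hw
      rw [ancSet_step hxp] at hw
      rcases hw.1 with rfl | hw1
      · exact Or.inr rfl
      · exact Or.inl hw1
    · by_cases hmov : par u = some x ∧ p ∈ bdry G par u
      · -- u is a moved child, b = p
        rw [rot_at_moved hF hxp hmov.1 hmov.2] at h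
        cases Option.some_injective _ h
        have hum : u ∈ Mstar G par x p := ⟨u, hmov.1, hmov.2, mem_subtree_self⟩
        rw [phi_mstar hF hxp hum,
          phi_mid hF hxp (p_not_mstar hF hxp) ⟨mem_subtree_self, p_not_tx hF hxp⟩]
        intro w hw
        rw [ancSet_step hmov.1, ancSet_step hxp]
        rcases hw with hw | rfl
        · exact Set.mem_insert_of_mem _ (Set.mem_insert_of_mem _ hw)
        · exact Set.mem_insert_of_mem _ (Set.mem_insert _ _)
      · -- generic: par1 u = par u = some b
        rw [rot_at_other hF hxp hux hup hmov] at h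
        have hub : u ∈ subtree par b := mem_subtree_of_par h
        by_cases h1 : u ∈ Mstar G par x p
        · -- b stays in the same moved subtree
          obtain ⟨c, hc1, hc2, hc3⟩ := h1
          have huc : u ≠ c := by
            rintro rfl
            exact hmov ⟨hc1, hc2⟩
          have hbc : b ∈ subtree par c := isAnc_peel hc3 huc h
          have hbm : b ∈ Mstar G par x p := ⟨c, hc1, hc2, hbc⟩
          rw [phi_mstar hF hxp ⟨c, hc1, hc2, hc3⟩, phi_mstar hF hxp hbm]
          rw [ancSet_step h]
          exact Set.subset_insert _ _
        · by_cases h2 : u ∈ subtree par p \ subtree par x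
          · have hbp : b ∈ subtree par p := isAnc_peel h2.1 hup h
            have hbx : b ∉ subtree par x := fun hc => h2.2 (subtree_trans hub hc)
            have hbm : b ∉ Mstar G par x p := by
              rintro ⟨c, hc1, hc2, hc3⟩
              exact h1 ⟨c, hc1, hc2, subtree_trans hub hc3⟩
            rw [phi_mid hF hxp h1 h2, phi_mid hF hxp hbm ⟨hbp, hbx⟩]
            rw [ancSet_step h]
            rintro w (hw | rfl)
            · exact Or.inl (Set.mem_insert_of_mem _ hw)
            · exact Or.inr rfl
          · by_cases h3 : u ∈ subtree par x
            · have hbx : b ∈ subtree par x := isAnc_peel h3 hux h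
              have hbm : b ∉ Mstar G par x p := by
                rintro ⟨c, hc1, hc2, hc3⟩
                exact h1 ⟨c, hc1, hc2, subtree_trans hub hc3⟩
              rw [phi_tx hF hxp h1 h3, phi_tx hF hxp hbm hbx]
              rw [ancSet_step h]
              rintro w ⟨hw, hwp⟩
              exact ⟨Set.mem_insert_of_mem _ hw, hwp⟩
            · have h4 : u ∉ subtree par p := fun hc => h2 ⟨hc, h3⟩
              have hbp : b ∉ subtree par p := fun hc => h4 (subtree_trans hub hc)
              rw [phi_out hF hxp h4, phi_out hF hxp hbp, ancSet_step h]
              exact Set.subset_insert _ _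

lemma phi_fwd {u w : V} (h : isAnc (rotate G par x p) w u) : w ∈ phi G par x p u := by
  unfold isAnc at h
  induction h using Relation.ReflTransGen.head_induction_on with
  | refl => exact phi_self hF hxp
  | @head c b hcb hbw ih => exact phi_step hF hxp hcb ih

lemma child_eq {c a : V} (hc : par c = some x) (ha : par a = some x)
    (h : a ∈ subtree par c) : a = c := by
  by_contra hne
  have hd := hF.children_disjoint ha hc hne
  have : a ∈ subtree par a ∩ subtree par c := ⟨mem_subtree_self, h⟩
  rw [hd] at this
  exact this

lemma bwd_out {u w : V} (hu : u ∉ subtree par p) (h : isAnc par w u) :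
    isAnc (rotate G par x p) w u := by
  refine isAnc_congr (R := (subtree par p)ᶜ) ?_ ?_ u hu h
  · intro a ha _ _
    refine rot_at_other hF hxp ?_ ?_ ?_
    · rintro rfl; exact ha (mem_subtree_of_par hxp)
    · rintro rfl; exact ha mem_subtree_self
    · rintro ⟨h1, -⟩
      exact ha (tx_sub_tp hF hxp (mem_subtree_of_par h1))
  · intro a ha _ b hb _
    intro hbp
    exact ha (subtree_trans (mem_subtree_of_par hb) hbp)

lemma bwd_mid {u w : V} (hu : u ∈ subtree par p \ subtree par x)
    (hw : w ∈ subtree par p \ subtree par x) (h : isAnc par w u) :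
    isAnc (rotate G par x p) w u := by
  refine isAnc_congr (R := subtree par p \ subtree par x) ?_ ?_ u hu h
  · intro a ha haw hch
    refine rot_at_other hF hxp ?_ ?_ ?_
    · rintro rfl; exact ha.2 mem_subtree_self
    · rintro rfl
      exact haw (hF.antisymm hch hw.1).symm
    · rintro ⟨h1, -⟩
      exact ha.2 (mem_subtree_of_par h1)
  · intro a ha _ b hb hch
    refine ⟨subtree_trans hch hw.1, fun hc => ha.2 (subtree_trans (mem_subtree_of_par hb) hc)⟩

lemma bwd_tc {c u w : V} (hc : par c = some x) (hu : u ∈ subtree par c)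
    (hw : w ∈ subtree par c) (h : isAnc par w u) :
    isAnc (rotate G par x p) w u := by
  refine isAnc_congr (R := subtree par c) ?_ ?_ u hu h
  · intro a ha haw hch
    refine rot_at_other hF hxp ?_ ?_ ?_
    · rintro rfl; exact hF.par_not_mem hc ha
    · rintro rfl
      exact p_not_tx hF hxp ((hF.subtree_ssub hc ha).1)
    · rintro ⟨h1, -⟩
      have : a = c := child_eq hF hxp hc h1 ha
      subst this
      exact haw (hF.antisymm hch hw).symm
  · intro a ha _ b hb hch
    exact subtree_trans hch hw

lemma bwd_txm {u w : V} (hu : u ∈ subtree par x \ Mstar G par x p)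
    (hw : w ∈ subtree par x \ Mstar G par x p) (h : isAnc par w u) :
    isAnc (rotate G par x p) w u := by
  refine isAnc_congr (R := subtree par x \ Mstar G par x p) ?_ ?_ u hu h
  · intro a ha haw hch
    refine rot_at_other hF hxp ?_ ?_ ?_
    · rintro rfl
      exact haw (hF.antisymm hch hw.1).symm
    · rintro rfl; exact p_not_tx hF hxp ha.1
    · rintro ⟨h1, h2⟩
      exact ha.2 ⟨a, h1, h2, mem_subtree_self⟩
  · intro a ha _ b hb hch
    refine ⟨subtree_trans hch hw.1, fun hc => ?_⟩
    obtain ⟨c', hc1, hc2, hc3⟩ := hc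
    exact ha.2 ⟨c', hc1, hc2, subtree_trans (mem_subtree_of_par hb) hc3⟩

lemma bwd_from_x {w : V} (hw : isAnc par w x) (hwp : w ≠ p) :
    isAnc (rotate G par x p) w x := by
  by_cases hwx : w = x
  · subst hwx; exact isAnc.refl
  · have h1 : isAnc par w p := isAnc_peel hw (Ne.symm hwx) hxp
    rcases Relation.ReflTransGen.cases_head h1 with h2 | ⟨q, hq, hqc⟩
    · exact absurd h2.symm hwp
    · -- par p = some q, w ∈ anc q
      have hstep : rotate G par x p x = some q := by rw [rot_at_x hF hxp]; exact hq
      have hqp : q ∉ subtree par p := hF.par_not_mem hq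
      exact Relation.ReflTransGen.head hstep (bwd_out hF hxp hqp hqc)

lemma bwd_from_p {w : V} (hw : isAnc par w p) :
    isAnc (rotate G par x p) w p := by
  by_cases hwp : w = p
  · subst hwp; exact isAnc.refl
  · have hwx : isAnc par w x := Relation.ReflTransGen.head hxp hw
    exact Relation.ReflTransGen.head (rot_at_p hF hxp) (bwd_from_x hF hxp hwx hwp)

/-- chain from a moved element up to `p` -/
lemma bwd_mstar_p {u : V} (hu : u ∈ Mstar G par x p) :
    isAnc (rotate G par x p) p u := by
  obtain ⟨c, hc1, hc2, hc3⟩ := hu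
  exact (bwd_tc hF hxp hc1 hc3 mem_subtree_self hc3).trans
    (Relation.ReflTransGen.single (rot_at_moved hF hxp hc1 hc2))

lemma subtree_rot_x : subtree (rotate G par x p) x = subtree par p := by
  ext u
  constructor
  · intro hu
    have hphi := phi_fwd hF hxp hu
    by_cases h1 : u ∈ Mstar G par x p
    · exact tx_sub_tp hF hxp (mstar_subset hF hxp h1).1
    · by_cases h2 : u ∈ subtree par p \ subtree par x
      · exact h2.1
      · by_cases h3 : u ∈ subtree par x
        · exact tx_sub_tp hF hxp h3
        · have h4 : u ∉ subtree par p := fun hc => h2 ⟨hc, h3⟩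
          rw [phi_out hF hxp h4] at hphi
          exact absurd (tx_sub_tp hF hxp hphi) h4
  · intro hu
    by_cases h1 : u ∈ Mstar G par x p
    · exact (bwd_mstar_p hF hxp h1).trans
        (Relation.ReflTransGen.single (rot_at_p hF hxp))
    · by_cases h3 : u ∈ subtree par x
      · exact bwd_txm hF hxp ⟨h3, h1⟩ ⟨mem_subtree_self, x_not_mstar hF hxp⟩ h3
      · exact (bwd_mid hF hxp ⟨hu, h3⟩ ⟨mem_subtree_self, p_not_tx hF hxp⟩ hu).trans
          (Relation.ReflTransGen.single (rot_at_p hF hxp))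

lemma subtree_rot_p : subtree (rotate G par x p) p =
    (subtree par p \ subtree par x) ∪ Mstar G par x p := by
  ext u
  constructor
  · intro hu
    have hphi := phi_fwd hF hxp hu
    by_cases h1 : u ∈ Mstar G par x p
    · exact Or.inr h1
    · by_cases h2 : u ∈ subtree par p \ subtree par x
      · exact Or.inl h2
      · by_cases h3 : u ∈ subtree par x
        · rw [phi_tx hF hxp h1 h3] at hphi
          exact absurd rfl hphi.2
        · have h4 : u ∉ subtree par p := fun hc => h2 ⟨hc, h3⟩
          rw [phi_out hF hxp h4] at hphi
          exact absurd hphi h4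
  · rintro (hu | hu)
    · exact bwd_mid hF hxp hu ⟨mem_subtree_self, p_not_tx hF hxp⟩ hu.1
    · exact bwd_mstar_p hF hxp hu

lemma subtree_rot_other {w : V} (hwx : w ≠ x) (hwp : w ≠ p) :
    subtree (rotate G par x p) w = subtree par w := by
  ext u
  constructor
  · intro hu
    have hphi := phi_fwd hF hxp hu
    by_cases h1 : u ∈ Mstar G par x p
    · rwa [phi_mstar hF hxp h1] at hphi
    · by_cases h2 : u ∈ subtree par p \ subtree par x
      · rw [phi_mid hF hxp h1 h2] at hphi
        rcases hphi with hphi | rfl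
        · exact hphi
        · exact absurd rfl hwx
      · by_cases h3 : u ∈ subtree par x
        · exact (phi_tx hF hxp h1 h3 ▸ hphi).1
        · have h4 : u ∉ subtree par p := fun hc => h2 ⟨hc, h3⟩
          rwa [phi_out hF hxp h4] at hphi
  · intro hu
    by_cases h4 : u ∈ subtree par p
    · by_cases h1 : u ∈ Mstar G par x p
      · obtain ⟨c, hc1, hc2, hc3⟩ := h1
        rcases isAnc_total hu hc3 with hA | hA
        · -- w ∈ subtree c
          exact bwd_tc hF hxp hc1 hc3 hA hu
        · -- isAnc w c
          by_cases hwc : w = c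
          · subst hwc; exact bwd_tc hF hxp hc1 hc3 mem_subtree_self hu
          · have hwx' : isAnc par w x := isAnc_peel hA (Ne.symm hwc) hc1
            refine ((bwd_mstar_p hF hxp ⟨c, hc1, hc2, hc3⟩).trans
              (Relation.ReflTransGen.single (rot_at_p hF hxp))).trans ?_
            exact bwd_from_x hF hxp hwx' hwp
      · by_cases h3 : u ∈ subtree par x
        · rcases isAnc_total hu h3 with hA | hA
          · -- isAnc x w, i.e. w ∈ Tx
            have hwm : w ∉ Mstar G par x p := by
              rintro ⟨c', hc1, hc2, hc3⟩
              exact h1 ⟨c', hc1, hc2, subtree_trans hu hc3⟩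
            exact bwd_txm hF hxp ⟨h3, h1⟩ ⟨hA, hwm⟩ hu
          · -- isAnc w x
            exact (bwd_txm hF hxp ⟨h3, h1⟩ ⟨mem_subtree_self, x_not_mstar hF hxp⟩ h3).trans
              (bwd_from_x hF hxp hA hwp)
        · -- u ∈ Tp \ Tx
          rcases isAnc_total hu h4 with hA | hA
          · -- isAnc p w : w ∈ Tp
            have hwtx : w ∉ subtree par x := fun hc => h3 (subtree_trans hu hc)
            exact bwd_mid hF hxp ⟨h4, h3⟩ ⟨hA, hwtx⟩ hu
          · exact (bwd_mid hF hxp ⟨h4, h3⟩ ⟨mem_subtree_self, p_not_tx hF hxp⟩ h4).trans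
              (bwd_from_p hF hxp hA)
    · exact bwd_out hF hxp h4 hu

lemma bdry_rot_x : bdry G (rotate G par x p) x = bdry G par p := by
  unfold bdry; rw [subtree_rot_x hF hxp]

lemma bdry_rot_other {w : V} (hwx : w ≠ x) (hwp : w ≠ p) :
    bdry G (rotate G par x p) w = bdry G par w := by
  unfold bdry; rw [subtree_rot_other hF hxp hwx hwp]

end Rot

/-! ### The boundary bound for the new subtree of `p` -/

section Bound

set_option linter.unusedSectionVars false

variable {G : SimpleGraph V} {par : V → Option V} {r x p : V}
variable (hF : STTFacts G par r) (hxp : par x = some p)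
include hF hxp

lemma three_le_ncard {A : Set V} {a b c : V} (ha : a ∈ A) (hb : b ∈ A) (hc : c ∈ A)
    (h1 : a ≠ b) (h2 : a ≠ c) (h3 : b ≠ c) (hfin : A.Finite) : 3 ≤ A.ncard := by
  have hsub : {a, b, c} ⊆ A := by
    intro z hz
    rcases hz with rfl | rfl | rfl
    exacts [ha, hb, hc]
  have h5 : ({a, b, c} : Set V).ncard = 3 := by
    rw [Set.ncard_insert_of_notMem (by simp [h1, h2]) (Set.Finite.subset hfin (by
      intro z hz; rcases hz with rfl | rfl; exacts [hb, hc])), Set.ncard_pair h3]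
  rw [← h5]
  exact Set.ncard_le_ncard hsub hfin

lemma bdry_rot_p_subset [Fintype V] (hG : G.IsTree) (h2 : TwoCut G par) :
    bdry G (rotate G par x p) p ⊆ insert x (bdry G par p \ bdry G par x) := by
  rw [bdry_eq_setBdry, subtree_rot_p hF hxp]
  rintro z ⟨hzn, a, ha, hadj⟩
  rcases ha with ha | ha
  · -- a ∈ Tp \ Tx
    by_cases hzp : z ∈ subtree par p
    · -- z inside Tp: z must be x
      have hzx : z ∈ subtree par x := by
        by_contra hc
        exact hzn (Or.inl ⟨hzp, hc⟩)
      by_cases hzx' : z = x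
      · exact Or.inl hzx'
      · exfalso
        obtain ⟨c, hc1, hc2⟩ := subtree_child hzx hzx'
        by_cases hmov : p ∈ bdry G par c
        · exact hzn (Or.inr ⟨c, hc1, hmov, hc2⟩)
        · have hanc : a ∉ subtree par c := fun hcc =>
            ha.2 ((hF.subtree_ssub hc1 hcc).1)
          have habd : a ∈ bdry G par c := ⟨hanc, z, hc2, hadj.symm⟩
          have := hF.bdry_subset hc1 habd
          rcases this with rfl | hax
          · exact ha.2 mem_subtree_self
          · have := hF.bdry_subset hxp hax
            rcases this with rfl | hap
            · exact hmov habd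
            · exact hap.1 ha.1
    · -- z outside Tp
      right
      refine ⟨⟨hzp, a, ha.1, hadj⟩, ?_⟩
      rintro ⟨hzx, a', ha', hadj'⟩
      have := tree_unique_nbr hG (hF.conn p) hzp ha.1 (tx_sub_tp hF hxp ha') hadj hadj'
      exact ha.2 (this ▸ ha')
  · -- a ∈ Mstar, via moved child c
    obtain ⟨c, hc1, hc2, hc3⟩ := ha
    have hznc : z ∉ subtree par c := fun hcc => hzn (Or.inr ⟨c, hc1, hc2, hcc⟩)
    have hzbd : z ∈ bdry G par c := ⟨hznc, a, hc3, hadj⟩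
    rcases hF.bdry_subset hc1 hzbd with rfl | hzx
    · exact Or.inl rfl
    · rcases hF.bdry_subset hxp hzx with rfl | hzp
      · exact absurd (Or.inl ⟨mem_subtree_self, p_not_tx hF hxp⟩) hzn
      · -- z ∈ bdry p ∩ bdry x : contradiction with 2-cut of c
        exfalso
        have hx_bd : x ∈ bdry G par c := hF.parent_mem_bdry hc1
        have hxz : x ≠ z := fun hc => hzx.1 (hc ▸ mem_subtree_self)
        have hpz : p ≠ z := fun hc => hzp.1 (hc ▸ mem_subtree_self)
        have h3 := three_le_ncard hF hxp hx_bd hc2 hzbd (rot_ne_xp hF hxp) hxz hpz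
          (Set.toFinite _)
        have := h2 c
        omega

lemma bdry_rot_p_card [Fintype V] (hG : G.IsTree) (h2 : TwoCut G par)
    (hsx : (bdry G par x).ncard = 2) :
    (bdry G (rotate G par x p) p).ncard ≤ 2 := by
  have hpmem : p ∈ bdry G par x := hF.parent_mem_bdry hxp
  -- find the second boundary element of Tx
  have h1 : (bdry G par x \ {p}).ncard = 1 := by
    rw [Set.ncard_diff_singleton_of_mem hpmem, hsx]
  obtain ⟨b, hb⟩ := Set.nonempty_of_ncard_ne_zero (s := bdry G par x \ {p}) (by omega)
  have hbx : b ∈ bdry G par x := hb.1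
  have hbp : b ∈ bdry G par p := by
    rcases hF.bdry_subset hxp hbx with rfl | h
    · exact absurd rfl hb.2
    · exact h
  have hsub2 : bdry G par p \ bdry G par x ⊆ bdry G par p \ {b} := by
    intro z hz
    exact ⟨hz.1, fun hc => hz.2 (hc ▸ hbx)⟩
  have hle : (bdry G par p \ bdry G par x).ncard ≤ 1 := by
    have e1 : (bdry G par p \ {b}).ncard = (bdry G par p).ncard - 1 :=
      Set.ncard_diff_singleton_of_mem hbp
    have e2 := Set.ncard_le_ncard hsub2 (Set.toFinite _)
    have := h2 p
    omega
  calc (bdry G (rotate G par x p) p).ncard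
      ≤ (insert x (bdry G par p \ bdry G par x)).ncard :=
        Set.ncard_le_ncard (bdry_rot_p_subset hF hxp hG h2) (Set.toFinite _)
    _ ≤ (bdry G par p \ bdry G par x).ncard + 1 := Set.ncard_insert_le _ _
    _ ≤ 2 := by omega

lemma twoCut_rot [Fintype V] (hG : G.IsTree) (h2 : TwoCut G par)
    (hsx : (bdry G par x).ncard = 2) :
    TwoCut G (rotate G par x p) := by
  intro w
  by_cases hw1 : w = x
  · subst hw1; rw [bdry_rot_x hF hxp]; exact h2 p
  · by_cases hw2 : w = p
    · subst hw2; exact bdry_rot_p_card hF hxp hG h2 hsx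
    · rw [bdry_rot_other hF hxp hw1 hw2]; exact h2 w

end Bound

/-! ### Recognizing a search tree from subtree compatibility -/

section Recog

variable {G : SimpleGraph V} {par' : V → Option V} {r : V}

lemma recog_aux [Fintype V] (hroot : par' r = none) (hreach : ∀ u, isAnc par' r u)
    (hcompat : ∀ u pu, par' u = some pu →
      subtree par' u = compIn G (subtree par' pu \ {pu}) u) :
    ∀ n v, (subtree par' v).ncard ≤ n → IsSearchTree G par' (subtree par' v) v := by
  intro n
  induction n with
  | zero =>
      intro v hv
      exfalso
      have : 0 < (subtree par' v).ncard :=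
        (Set.ncard_pos (Set.toFinite _)).mpr ⟨v, mem_subtree_self⟩
      omega
  | succ n ih =>
      intro v hv
      classical
      refine IsSearchTree.node _ v
        (fun u => if h : ∃ c, par' c = some v ∧ u ∈ subtree par' c then h.choose else u)
        mem_subtree_self ?_ ?_
      · intro u hu hune
        beta_reduce
        rw [dif_pos (subtree_child hu hune)]
        exact (subtree_child hu hune).choose_spec.1
      · intro u hu hune
        have hex : ∃ c, par' c = some v ∧ u ∈ subtree par' c := subtree_child hu hune
        beta_reduce
        rw [dif_pos hex]
        obtain ⟨hc1', hc2'⟩ := hex.choose_spec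
        have hchar := hcompat _ v hc1'
        have hmem : u ∈ compIn G (subtree par' v \ {v}) hex.choose := by
          rw [← hchar]; exact hc2'
        have heq : compIn G (subtree par' v \ {v}) u = subtree par' hex.choose :=
          (compIn_eq_of_mem hmem).symm.trans hchar.symm
        rw [heq]
        apply ih
        have hsub : subtree par' hex.choose ⊆ subtree par' v \ {v} := by
          intro z hz
          refine ⟨subtree_trans hz (mem_subtree_of_par hc1'), fun hzz => ?_⟩
          exact not_mem_subtree_of_par hroot hreach hc1' (hzz ▸ hz)
        have h1 := Set.ncard_le_ncard hsub (Set.toFinite _)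
        have h2 : (subtree par' v \ {v}).ncard = (subtree par' v).ncard - 1 :=
          Set.ncard_diff_singleton_of_mem mem_subtree_self
        have h3 : 0 < (subtree par' v).ncard :=
          (Set.ncard_pos (Set.toFinite _)).mpr ⟨v, mem_subtree_self⟩
        omega

lemma recog [Fintype V] (hroot : par' r = none) (hreach : ∀ u, isAnc par' r u)
    (hcompat : ∀ u pu, par' u = some pu →
      subtree par' u = compIn G (subtree par' pu \ {pu}) u) :
    IsSearchTree G par' Set.univ r := by
  have huniv : subtree par' r = Set.univ := by
    ext u; simp only [Set.mem_univ, iff_true]; exact hreach u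
  have h := recog_aux (G := G) hroot hreach hcompat (subtree par' r).ncard r le_rfl
  rwa [huniv] at h

end Recog

/-! ### The rotation of a 2-cut search tree is a search tree -/

section Core

set_option linter.unusedSectionVars false

variable {G : SimpleGraph V} {par : V → Option V} {r x p : V}
variable [Fintype V] (hG : G.IsTree)
variable (hF : STTFacts G par r) (hxp : par x = some p) (h2 : TwoCut G par)
  (hsx : (bdry G par x).ncard = 2) (hpr : p ≠ r)
include hG hF hxp h2 hsx hpr

lemma rot_r_ne_x : r ≠ x := by
  rintro rfl
  rw [hF.root_none] at hxp
  exact Option.some_ne_none _ hxp.symm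

lemma rot_root : rotate G par x p r = none := by
  rw [rot_at_other hF hxp (rot_r_ne_x hG hF hxp h2 hsx hpr) (Ne.symm hpr)
    (fun hc => by rw [hF.root_none] at hc; exact Option.some_ne_none _ hc.1.symm)]
  exact hF.root_none

lemma rot_reach : ∀ u, isAnc (rotate G par x p) r u := by
  intro u
  have h := subtree_rot_other hF hxp (rot_r_ne_x hG hF hxp h2 hsx hpr) (Ne.symm hpr)
  have : u ∈ subtree (rotate G par x p) r := by
    rw [h]; exact hF.reach u
  exact this

/-- connectivity of the new subtree of `p` -/
lemma s1_conn : ∀ a ∈ (subtree par p \ subtree par x) ∪ Mstar G par x p,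
    reachIn G ((subtree par p \ subtree par x) ∪ Mstar G par x p) a p := by
  set S1 := (subtree par p \ subtree par x) ∪ Mstar G par x p with hS1
  have hpS1 : p ∈ S1 := Or.inl ⟨mem_subtree_self, p_not_tx hF hxp⟩
  rintro a (ha | ha)
  · -- a ∈ Tp \ Tx
    by_cases hap : a = p
    · subst hap; exact reachIn.refl
    · obtain ⟨c', hc1, hc2⟩ := subtree_child ha.1 hap
      have hcx : c' ≠ x := by
        rintro rfl
        exact ha.2 hc2
      have hdisj := hF.children_disjoint hc1 hxp hcx
      have hTc : subtree par c' ⊆ S1 := by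
        intro z hz
        refine Or.inl ⟨subtree_trans hz (mem_subtree_of_par hc1), fun hzx => ?_⟩
        have : z ∈ subtree par c' ∩ subtree par x := ⟨hz, hzx⟩
        rw [hdisj] at this
        exact this
      obtain ⟨-, z, hz1, hz2⟩ := hF.parent_mem_bdry hc1
      have r1 : reachIn G (subtree par c') a z := hF.conn c' a hc2 z hz1
      have r2 : reachIn G S1 a z := r1.mono hTc
      exact r2.trans (reachIn.single (hTc hz1) hpS1 hz2.symm)
  · -- a ∈ Mstar
    obtain ⟨c, hc1, hc2, hc3⟩ := ha
    have hTc : subtree par c ⊆ S1 := fun z hz => Or.inr ⟨c, hc1, hc2, hz⟩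
    obtain ⟨-, z, hz1, hz2⟩ := hc2
    have r1 : reachIn G (subtree par c) a z := hF.conn c a hc3 z hz1
    exact (r1.mono hTc).trans (reachIn.single (hTc hz1) hpS1 hz2.symm)

lemma rot_compat : ∀ u pu, rotate G par x p u = some pu →
    subtree (rotate G par x p) u =
      compIn G (subtree (rotate G par x p) pu \ {pu}) u := by
  intro u pu hpu
  by_cases hux : u = x
  · -- u = x, pu = q with par p = some q
    obtain rfl := hux.symm
    rw [rot_at_x hF hxp] at hpu
    have hqx : pu ≠ x := by
      rintro rfl
      exact rot_p_not_x hF hxp hpu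
    have hqp : pu ≠ p := fun hc => hF.par_ne hpu hc.symm
    rw [subtree_rot_x hF hxp, subtree_rot_other hF hxp hqx hqp]
    have hchar := hF.char p pu hpu
    have hmem : x ∈ compIn G (subtree par pu \ {pu}) p := by
      rw [← hchar]; exact mem_subtree_of_par hxp
    rw [hchar]
    exact compIn_eq_of_mem hmem
  · by_cases hup : u = p
    · -- u = p, pu = x
      obtain rfl := hup.symm
      rw [rot_at_p hF hxp] at hpu
      obtain rfl : x = pu := Option.some_injective _ hpu
      rw [subtree_rot_p hF hxp, subtree_rot_x hF hxp]
      symm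
      apply compIn_eq_self (G := G)
      · -- S1 ⊆ Tp \ {x}
        rintro z (hz | hz)
        · exact ⟨hz.1, fun hc => hz.2 (hc ▸ mem_subtree_self)⟩
        · have := mstar_subset hF hxp hz
          exact ⟨tx_sub_tp hF hxp this.1, this.2⟩
      · exact Or.inl ⟨mem_subtree_self, p_not_tx hF hxp⟩
      · intro a ha b hb
        exact (s1_conn hG hF hxp h2 hsx hpr a ha).trans
          (s1_conn hG hF hxp h2 hsx hpr b hb).symm
      · -- boundary of S1 avoids Tp \ {x}
        intro z hz
        have hz' : z ∈ bdry G (rotate G par x p) p := by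
          rw [bdry_eq_setBdry, subtree_rot_p hF hxp]
          exact hz
        rcases bdry_rot_p_subset hF hxp hG h2 hz' with rfl | ⟨hzp, -⟩
        · rintro ⟨-, hc⟩; exact hc rfl
        · rintro ⟨hc, -⟩; exact hzp.1 hc
    · by_cases hmov : par u = some x ∧ p ∈ bdry G par u
      · -- moved child, pu = p
        rw [rot_at_moved hF hxp hmov.1 hmov.2] at hpu
        obtain rfl : p = pu := Option.some_injective _ hpu
        rw [subtree_rot_other hF hxp hux hup, subtree_rot_p hF hxp]
        symm
        apply compIn_eq_self (G := G)
        · intro z hz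
          refine ⟨Or.inr ⟨u, hmov.1, hmov.2, hz⟩, fun hzp => ?_⟩
          exact p_not_tx hF hxp ((hF.subtree_ssub hmov.1 (hzp ▸ hz)).1)
        · exact mem_subtree_self
        · exact fun a ha b hb => hF.conn u a ha b hb
        · intro z hz hzS
          have hzb : z ∈ bdry G par u := hz
          rcases hF.bdry_subset hmov.1 hzb with rfl | hzx
          · -- z = x : x ∉ S1
            rcases hzS.1 with hc | hc
            · exact hc.2 mem_subtree_self
            · exact x_not_mstar hF hxp hc
          · rcases hF.bdry_subset hxp hzx with rfl | hzp
            · exact hzS.2 rfl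
            · rcases hzS.1 with hc | hc
              · exact hzp.1 hc.1
              · exact hzp.1 (tx_sub_tp hF hxp (mstar_subset hF hxp hc).1)
      · -- generic
        rw [rot_at_other hF hxp hux hup hmov] at hpu
        rw [subtree_rot_other hF hxp hux hup]
        by_cases hpux : pu = x
        · -- unmoved child of x
          subst hpux
          have hnb : p ∉ bdry G par u := fun hc => hmov ⟨hpu, hc⟩
          rw [subtree_rot_x hF hxp]
          symm
          apply compIn_eq_self (G := G)
          · intro z hz
            have := hF.subtree_ssub hpu hz
            exact ⟨tx_sub_tp hF hxp this.1, this.2⟩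
          · exact mem_subtree_self
          · exact fun a ha b hb => hF.conn u a ha b hb
          · intro z hz hzS
            have hzb : z ∈ bdry G par u := hz
            rcases hF.bdry_subset hpu hzb with rfl | hzx
            · exact hzS.2 rfl
            · rcases hF.bdry_subset hxp hzx with rfl | hzp
              · exact hnb hzb
              · exact hzp.1 hzS.1
        · by_cases hpup : pu = p
          · -- child of p other than x
            obtain rfl := hpup.symm
            rw [subtree_rot_p hF hxp]
            symm
            apply compIn_eq_self (G := G)
            · intro z hz
              have hzp2 : z ≠ p := by
                rintro rfl
                exact hF.par_not_mem hpu hz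
              refine ⟨Or.inl ⟨subtree_trans hz (mem_subtree_of_par hpu), ?_⟩, hzp2⟩
              intro hzx
              have hd := hF.children_disjoint hpu hxp hux
              have : z ∈ subtree par u ∩ subtree par x := ⟨hz, hzx⟩
              rw [hd] at this
              exact this
            · exact mem_subtree_self
            · exact fun a ha b hb => hF.conn u a ha b hb
            · intro z hz hzS
              have hzb : z ∈ bdry G par u := hz
              rcases hF.bdry_subset hpu hzb with rfl | hzp
              · exact hzS.2 rfl
              · rcases hzS.1 with hc | hc
                · exact hzp.1 hc.1
                · exact hzp.1 (tx_sub_tp hF hxp (mstar_subset hF hxp hc).1)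
          · -- parent untouched
            rw [subtree_rot_other hF hxp hpux hpup]
            exact hF.char u pu hpu

theorem rotate_core :
    TwoCut G (rotate G par x p) ∧ rotate G par x p r = none ∧
      IsSearchTree G (rotate G par x p) Set.univ r :=
  ⟨twoCut_rot hF hxp hG h2 hsx,
   rot_root hG hF hxp h2 hsx hpr,
   recog (rot_root hG hF hxp h2 hsx hpr) (rot_reach hG hF hxp h2 hsx hpr)
     (rot_compat hG hF hxp h2 hsx hpr)⟩

end Core


/-- In a 2-cut STT, if `v` has parent `p` and grandparent `g`, where `g`
has parent `h` and grandparent `i`, and `g`, `h`, `i` are all separators, then the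
splay step at `g` preserves the 2-cut property. -/
theorem splayStep_at_grandparent_allowed [Fintype V] (G : SimpleGraph V)
    (hG : G.IsTree) (par : V → Option V) (r : V) (hroot : par r = none)
    (hT : IsSearchTree G par Set.univ r) (h2 : TwoCut G par)
    (v p g h i : V) (hvp : par v = some p) (hpg : par p = some g)
    (hgh : par g = some h) (hhi : par h = some i)
    (hsg : (bdry G par g).ncard = 2) (hsh : (bdry G par h).ncard = 2)
    (hsi : (bdry G par i).ncard = 2) :
    TwoCut G (splayStep G par g) := by
  have hstep : splayStep G par g = rotate G (rotate G par g h) g i := by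
    simp only [splayStep, hgh, hhi, if_pos hsg]
  rw [hstep]
  have hF : STTFacts G par r := sttFacts_of hG.isConnected hroot hT
  have hhr : h ≠ r := by
    rintro rfl
    rw [hroot] at hhi
    exact Option.some_ne_none _ hhi.symm
  obtain ⟨h2', hroot', hT'⟩ := rotate_core hG hF hgh h2 hsg hhr
  have hF1 : STTFacts G (rotate G par g h) r := sttFacts_of hG.isConnected hroot' hT'
  have hih : i ≠ h := Ne.symm (hF.par_ne hhi)
  have hig : i ≠ g := by
    rintro rfl
    exact rot_p_not_x hF hgh hhi
  have hgi1 : rotate G par g h g = some i := by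
    rw [rot_at_x hF hgh]; exact hhi
  have hsg1 : (bdry G (rotate G par g h) g).ncard = 2 := by
    rw [bdry_rot_x hF hgh]; exact hsh
  have hir : i ≠ r := by
    rintro rfl
    have hempty : bdry G par i = ∅ := by
      ext z
      simp only [Set.mem_empty_iff_false, iff_false]
      rintro ⟨hz, -⟩
      exact hz (hF.reach z)
    rw [hempty] at hsi
    simp at hsi
  exact (rotate_core hG hF1 hgi1 h2' hsg1 hir).1
end
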